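/- arXiv:2009.09511 — 7 statements merged into one kernel-verified Lean document; each statement's English description precedes it below -/
import Mathlib

section
/- Let A be n×n, B n×m, K m×n, D n×d real matrices and γ > 0. Suppose S := A − BK is Schur stable, Q (n×n) and R (m×m) are symmetric positive semidefinite, and P is a real symmetric positive semidefinite n×n matrix such that γ²I_d − Dᵀ P D is positive definite and P solves the modified Riccati equation Sᵀ P̃ S + Q + Kᵀ R K = P, where P̃ := P + P D (γ²I_d − Dᵀ P D)⁻¹ Dᵀ P. Let P̄ := Σ_{i=0}^∞ (Sᵀ)^i (Q + Kᵀ R K) S^i be the solution of the Lyapunov equation Sᵀ P̄ S − P̄ = −(Q + Kᵀ R K). Then P − P̄ = Σ_{i=0}^∞ (Sᵀ)^{i+1} (P D (γ²I_d − Dᵀ P D)⁻¹ Dᵀ P) S^{i+1}; in particular P − P̄ is positive semidefinite, so P ≥ P̄. -/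
open Matrix

/-- A real square matrix is Schur stable if every eigenvalue of it,
viewed as a complex matrix, has modulus strictly less than 1. -/
def SchurStable {k : ℕ} (S : Matrix (Fin k) (Fin k) ℝ) : Prop :=
  ∀ μ ∈ spectrum ℂ (S.map (algebraMap ℝ ℂ)), ‖μ‖ < 1

open Filter Topology
open scoped NNReal ENNReal

section Aux

attribute [local instance] Matrix.linftyOpNormedAddCommGroup Matrix.linftyOpNormedSpace
  Matrix.linftyOpSemiNormedRing Matrix.linftyOpNormedRing Matrix.linftyOpNormedAlgebra

variable {k : ℕ}

lemma nnnorm_complexify (M : Matrix (Fin k) (Fin k) ℝ) :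
    ‖M.map (algebraMap ℝ ℂ)‖₊ = ‖M‖₊ := by
  simp [Matrix.linfty_opNNNorm_def, Matrix.map_apply, Algebra.algebraMap_eq_smul_one]

lemma schurStable_transpose {S : Matrix (Fin k) (Fin k) ℝ} (hS : SchurStable S) :
    SchurStable Sᵀ := by
  intro μ hμ
  refine hS μ ?_
  rw [spectrum.mem_iff] at hμ ⊢
  intro hU
  apply hμ
  have h1 : (algebraMap ℂ (Matrix (Fin k) (Fin k) ℂ)) μ - Sᵀ.map (algebraMap ℝ ℂ)
      = ((algebraMap ℂ (Matrix (Fin k) (Fin k) ℂ)) μ - S.map (algebraMap ℝ ℂ))ᵀ := by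
    rw [Matrix.transpose_sub, Matrix.transpose_map]
    congr 1
    rw [Matrix.algebraMap_eq_diagonal, Matrix.diagonal_transpose]
  rw [h1, Matrix.isUnit_transpose]
  exact hU

lemma schur_decay {S : Matrix (Fin k) (Fin k) ℝ} (hS : SchurStable S) :
    ∃ r : ℝ≥0, r < 1 ∧ ∀ᶠ i in atTop, ‖S ^ i‖₊ ≤ r ^ i := by
  set Mc := S.map (algebraMap ℝ ℂ) with hMc
  have hfin := Matrix.finite_spectrum (R := ℂ) Mc
  have h1 : spectralRadius ℂ Mc < 1 := by
    have hlt : ∀ μ ∈ hfin.toFinset, (‖μ‖₊ : ℝ≥0∞) < 1 := by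
      intro μ hμ
      have := hS μ (hfin.mem_toFinset.mp hμ)
      rw [← ENNReal.coe_one, ENNReal.coe_lt_coe, ← NNReal.coe_lt_coe]
      simpa using this
    calc spectralRadius ℂ Mc ≤ hfin.toFinset.sup (fun μ => (‖μ‖₊ : ℝ≥0∞)) := by
          rw [spectralRadius]
          exact iSup₂_le fun μ hμ => Finset.le_sup (f := fun μ => (‖μ‖₊ : ℝ≥0∞)) (hfin.mem_toFinset.mpr hμ)
      _ < 1 := (Finset.sup_lt_iff (by simp)).mpr hlt
  obtain ⟨ρ, hρ1, hρ2⟩ := exists_between h1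
  have hρtop : ρ ≠ ⊤ := (hρ2.trans_le le_top).ne
  have hGel := spectrum.pow_nnnorm_pow_one_div_tendsto_nhds_spectralRadius Mc
  have hev : ∀ᶠ n : ℕ in atTop, (‖Mc ^ n‖₊ : ℝ≥0∞) ^ (1 / (n : ℝ)) < ρ :=
    hGel.eventually_lt_const hρ1
  refine ⟨ρ.toNNReal, ?_, ?_⟩
  · rw [← ENNReal.coe_lt_one_iff, ENNReal.coe_toNNReal hρtop]
    exact hρ2
  · filter_upwards [hev, eventually_ge_atTop 1] with i hi hi1
    have hnn : (i : ℝ) ≠ 0 := by positivity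
    have h2 : (‖Mc ^ i‖₊ : ℝ≥0∞) < ρ ^ (i : ℝ) := by
      calc (‖Mc ^ i‖₊ : ℝ≥0∞) = ((‖Mc ^ i‖₊ : ℝ≥0∞) ^ (1 / (i : ℝ))) ^ (i : ℝ) := by
            rw [← ENNReal.rpow_mul, one_div, inv_mul_cancel₀ hnn, ENNReal.rpow_one]
        _ < ρ ^ (i : ℝ) := ENNReal.rpow_lt_rpow hi (by positivity)
    have hMcpow : Mc ^ i = (S ^ i).map (algebraMap ℝ ℂ) := by
      rw [hMc]
      exact (map_pow ((algebraMap ℝ ℂ).mapMatrix) S i).symm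
    rw [hMcpow, nnnorm_complexify] at h2
    rw [← ENNReal.coe_toNNReal hρtop, ← ENNReal.coe_rpow_of_nonneg _ (by positivity),
      ENNReal.coe_lt_coe] at h2
    rw [← NNReal.rpow_natCast]
    exact h2.le

lemma geom_aux {r r' : ℝ≥0} (hr : r < 1) (hr' : r' < 1) :
    ((r' : ℝ) * r) < 1 ∧ 0 ≤ ((r' : ℝ) * r) := by
  constructor
  · calc (r' : ℝ) * r ≤ (r' : ℝ) * 1 := by
          exact mul_le_mul_of_nonneg_left (by exact_mod_cast hr.le) (by positivity)
      _ < 1 := by rw [mul_one]; exact_mod_cast hr'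
  · positivity

lemma norm_conj_le {S M : Matrix (Fin k) (Fin k) ℝ} {r r' : ℝ≥0} {i : ℕ}
    (h1 : ‖S ^ i‖₊ ≤ r ^ i) (h2 : ‖Sᵀ ^ i‖₊ ≤ r' ^ i) :
    ‖Sᵀ ^ i * M * S ^ i‖ ≤ ‖M‖ * ((r' : ℝ) * r) ^ i := by
  calc ‖Sᵀ ^ i * M * S ^ i‖ ≤ ‖Sᵀ ^ i * M‖ * ‖S ^ i‖ := norm_mul_le _ _
    _ ≤ ‖Sᵀ ^ i‖ * ‖M‖ * ‖S ^ i‖ :=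
        mul_le_mul_of_nonneg_right (norm_mul_le _ _) (norm_nonneg _)
    _ ≤ (r' : ℝ) ^ i * ‖M‖ * (r : ℝ) ^ i := by
        have h1' : ‖S ^ i‖ ≤ (r : ℝ) ^ i := by exact_mod_cast h1
        have h2' : ‖Sᵀ ^ i‖ ≤ (r' : ℝ) ^ i := by exact_mod_cast h2
        exact mul_le_mul (mul_le_mul_of_nonneg_right h2' (norm_nonneg M)) h1'
          (norm_nonneg _) (by positivity)
    _ = ‖M‖ * ((r' : ℝ) * r) ^ i := by ring

lemma summable_conj' {S : Matrix (Fin k) (Fin k) ℝ} (hS : SchurStable S)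
    (M : Matrix (Fin k) (Fin k) ℝ) :
    Summable (fun i : ℕ => Sᵀ ^ i * M * S ^ i) := by
  obtain ⟨r, hr, hev⟩ := schur_decay hS
  obtain ⟨r', hr', hev'⟩ := schur_decay (schurStable_transpose hS)
  obtain ⟨hq1, hq0⟩ := geom_aux hr hr'
  refine Summable.of_norm_bounded_eventually_nat (g := fun i => ‖M‖ * ((r' : ℝ) * r) ^ i)
    (Summable.mul_left _ (summable_geometric_of_lt_one hq0 hq1)) ?_
  filter_upwards [hev, hev'] with i h1 h2
  exact norm_conj_le h1 h2

lemma tendsto_conj_zero' {S : Matrix (Fin k) (Fin k) ℝ} (hS : SchurStable S)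
    (M : Matrix (Fin k) (Fin k) ℝ) :
    Filter.Tendsto (fun i : ℕ => Sᵀ ^ i * M * S ^ i) Filter.atTop (nhds 0) := by
  obtain ⟨r, hr, hev⟩ := schur_decay hS
  obtain ⟨r', hr', hev'⟩ := schur_decay (schurStable_transpose hS)
  obtain ⟨hq1, hq0⟩ := geom_aux hr hr'
  refine squeeze_zero_norm' (a := fun i => ‖M‖ * ((r' : ℝ) * r) ^ i) ?_ ?_
  · filter_upwards [hev, hev'] with i h1 h2
    exact norm_conj_le h1 h2
  · simpa using (tendsto_pow_atTop_nhds_zero_of_lt_one hq0 hq1).const_mul ‖M‖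

end Aux

lemma summable_conj {k : ℕ} {S : Matrix (Fin k) (Fin k) ℝ} (hS : SchurStable S)
    (M : Matrix (Fin k) (Fin k) ℝ) :
    Summable (fun i : ℕ => Sᵀ ^ i * M * S ^ i) := by
  letI := Matrix.linftyOpNormedAddCommGroup (α := ℝ) (m := Fin k) (n := Fin k)
  letI := Matrix.linftyOpNormedSpace (R := ℝ) (α := ℝ) (m := Fin k) (n := Fin k)
  letI := Matrix.linftyOpNormedRing (α := ℝ) (n := Fin k)
  exact summable_conj' hS M

lemma tendsto_conj_zero {k : ℕ} {S : Matrix (Fin k) (Fin k) ℝ} (hS : SchurStable S)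
    (M : Matrix (Fin k) (Fin k) ℝ) :
    Filter.Tendsto (fun i : ℕ => Sᵀ ^ i * M * S ^ i) Filter.atTop (nhds 0) := by
  letI := Matrix.linftyOpNormedAddCommGroup (α := ℝ) (m := Fin k) (n := Fin k)
  letI := Matrix.linftyOpNormedSpace (R := ℝ) (α := ℝ) (m := Fin k) (n := Fin k)
  letI := Matrix.linftyOpNormedRing (α := ℝ) (n := Fin k)
  exact tendsto_conj_zero' hS M

lemma posSemidef_tsum {k : ℕ} {f : ℕ → Matrix (Fin k) (Fin k) ℝ} (hf : Summable f)
    (h : ∀ i, (f i).PosSemidef) : (∑' i, f i).PosSemidef := by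
  constructor
  · show _ = _
    rw [Matrix.conjTranspose_tsum]
    exact tsum_congr fun i => (h i).1
  · intro x
    let φ : Matrix (Fin k) (Fin k) ℝ →ₗ[ℝ] ℝ :=
      { toFun := fun M => x.sum fun i xi => x.sum fun j xj => star xi * M i j * xj
        map_add' := fun M N => by
          simp only [Finsupp.sum, Matrix.add_apply, mul_add, add_mul, Finset.sum_add_distrib]
        map_smul' := fun c M => by
          simp only [Finsupp.sum, Matrix.smul_apply, smul_eq_mul, RingHom.id_apply, Finset.mul_sum]
          exact Finset.sum_congr rfl fun i _ => Finset.sum_congr rfl fun j _ => by ring }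
    have hφ : Continuous φ := LinearMap.continuous_of_finiteDimensional φ
    have hsum : HasSum (fun i => φ (f i)) (φ (∑' i, f i)) :=
      hf.hasSum.map (φ.toAddMonoidHom) hφ
    exact hasSum_le (fun i => (h i).2 x) hasSum_zero hsum



/-- Step B of the proof of Theorem 1: if `S := A − BK` is Schur stable,
`P ≥ 0` solves the modified Riccati equation `Sᵀ P̃ S + Q + Kᵀ R K = P` with
`P̃ := P + P D (γ²I − Dᵀ P D)⁻¹ Dᵀ P` and `γ²I − Dᵀ P D > 0`, and
`P̄ := Σ_{i=0}^∞ (Sᵀ)^i (Q + Kᵀ R K) S^i` is the solution of the associated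
Lyapunov equation, then
`P − P̄ = Σ_{i=0}^∞ (Sᵀ)^{i+1} (P D (γ²I − Dᵀ P D)⁻¹ Dᵀ P) S^{i+1}`;
in particular `P − P̄` is positive semidefinite, i.e. `P ≥ P̄`. -/
theorem stmt_2 {n m d : ℕ}
    (A : Matrix (Fin n) (Fin n) ℝ) (B : Matrix (Fin n) (Fin m) ℝ)
    (K : Matrix (Fin m) (Fin n) ℝ) (D : Matrix (Fin n) (Fin d) ℝ)
    (γ : ℝ) (hγ : 0 < γ)
    (Q : Matrix (Fin n) (Fin n) ℝ) (R : Matrix (Fin m) (Fin m) ℝ)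
    (P : Matrix (Fin n) (Fin n) ℝ)
    (S : Matrix (Fin n) (Fin n) ℝ) (hSdef : S = A - B * K)
    (hS : SchurStable S)
    (hQ : Q.PosSemidef) (hR : R.PosSemidef) (hP : P.PosSemidef)
    (hγP : (γ ^ 2 • (1 : Matrix (Fin d) (Fin d) ℝ) - Dᵀ * P * D).PosDef)
    (Ptil : Matrix (Fin n) (Fin n) ℝ)
    (hPtil : Ptil = P + P * D * (γ ^ 2 • (1 : Matrix (Fin d) (Fin d) ℝ) - Dᵀ * P * D)⁻¹ * Dᵀ * P)
    (hRic : Sᵀ * Ptil * S + Q + Kᵀ * R * K = P)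
    (Pbar : Matrix (Fin n) (Fin n) ℝ)
    (hPbar : Pbar = ∑' i : ℕ, Sᵀ ^ i * (Q + Kᵀ * R * K) * S ^ i) :
    P - Pbar
      = (∑' i : ℕ, Sᵀ ^ (i + 1) *
          (P * D * (γ ^ 2 • (1 : Matrix (Fin d) (Fin d) ℝ) - Dᵀ * P * D)⁻¹ * Dᵀ * P)
          * S ^ (i + 1)) ∧
    (P - Pbar).PosSemidef := by
  classical
  set G := Q + Kᵀ * R * K with hG
  set X := P * D * (γ ^ 2 • (1 : Matrix (Fin d) (Fin d) ℝ) - Dᵀ * P * D)⁻¹ * Dᵀ * P with hX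
  have hRic' : Sᵀ * P * S + (G + Sᵀ * X * S) = P := by
    rw [hPtil] at hRic
    have hexp : Sᵀ * (P + X) * S = Sᵀ * P * S + Sᵀ * X * S := by
      rw [Matrix.mul_add, Matrix.add_mul]
    calc Sᵀ * P * S + (G + Sᵀ * X * S) = Sᵀ * (P + X) * S + Q + Kᵀ * R * K := by
          rw [hexp, hG]; abel
      _ = P := hRic
  -- partial sums identity
  have key : ∀ N : ℕ,
      (∑ i ∈ Finset.range N, Sᵀ ^ i * (G + Sᵀ * X * S) * S ^ i) + Sᵀ ^ N * P * S ^ N = P := by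
    intro N
    induction N with
    | zero => simp
    | succ N ih =>
      have h2 : Sᵀ ^ (N + 1) * P * S ^ (N + 1) = Sᵀ ^ N * (Sᵀ * P * S) * S ^ N := by
        rw [pow_succ Sᵀ N, pow_succ' S N]
        simp only [Matrix.mul_assoc]
      have h3 : Sᵀ ^ N * (G + Sᵀ * X * S) * S ^ N + Sᵀ ^ N * (Sᵀ * P * S) * S ^ N
          = Sᵀ ^ N * P * S ^ N := by
        rw [← Matrix.add_mul, ← Matrix.mul_add, add_comm (G + Sᵀ * X * S), hRic']
      rw [Finset.sum_range_succ, h2, add_assoc, h3, ih]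
  have hcongr : ∀ i : ℕ, Sᵀ ^ i * (Sᵀ * X * S) * S ^ i = Sᵀ ^ (i + 1) * X * S ^ (i + 1) := by
    intro i
    rw [pow_succ Sᵀ i, pow_succ' S i]
    simp only [Matrix.mul_assoc]
  have hsum_main := summable_conj hS (G + Sᵀ * X * S)
  have hsumG := summable_conj hS G
  have hsumX : Summable (fun i : ℕ => Sᵀ ^ (i + 1) * X * S ^ (i + 1)) := by
    have := summable_conj hS (Sᵀ * X * S)
    simpa only [hcongr] using this
  -- partial sums tend to P
  have h0 : Tendsto (fun N : ℕ => Sᵀ ^ N * P * S ^ N) atTop (𝓝 0) := tendsto_conj_zero hS P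
  have hps : Tendsto (fun N : ℕ => ∑ i ∈ Finset.range N, Sᵀ ^ i * (G + Sᵀ * X * S) * S ^ i)
      atTop (𝓝 P) := by
    have heq : (fun N : ℕ => ∑ i ∈ Finset.range N, Sᵀ ^ i * (G + Sᵀ * X * S) * S ^ i)
        = fun N : ℕ => P - Sᵀ ^ N * P * S ^ N := by
      funext N
      exact (eq_sub_of_add_eq (key N)).symm ▸ rfl
    rw [heq]
    have h0' : Tendsto (fun N : ℕ => P - Sᵀ ^ N * P * S ^ N) atTop (𝓝 (P - 0)) :=
      tendsto_const_nhds.sub h0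
    rwa [sub_zero] at h0'
  have hHS : HasSum (fun i : ℕ => Sᵀ ^ i * (G + Sᵀ * X * S) * S ^ i) P :=
    (hsum_main.hasSum_iff_tendsto_nat).mpr hps
  have hHS' : HasSum (fun i : ℕ => Sᵀ ^ i * G * S ^ i + Sᵀ ^ i * (Sᵀ * X * S) * S ^ i) P := by
    have : ∀ i : ℕ, Sᵀ ^ i * (G + Sᵀ * X * S) * S ^ i
        = Sᵀ ^ i * G * S ^ i + Sᵀ ^ i * (Sᵀ * X * S) * S ^ i := by
      intro i
      rw [Matrix.mul_add, Matrix.add_mul]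
    simpa only [this] using hHS
  have hGsum : HasSum (fun i : ℕ => Sᵀ ^ i * G * S ^ i) Pbar := by
    rw [hPbar]
    exact hsumG.hasSum
  have hXHS : HasSum (fun i : ℕ => Sᵀ ^ (i + 1) * X * S ^ (i + 1)) (P - Pbar) := by
    have := hHS'.sub hGsum
    simp only [add_sub_cancel_left] at this
    simpa only [hcongr] using this
  exact ⟨hXHS.tsum_eq.symm, by
    rw [← hXHS.tsum_eq]
    refine posSemidef_tsum hsumX fun i => ?_
    have hMinv : ((γ ^ 2 • (1 : Matrix (Fin d) (Fin d) ℝ) - Dᵀ * P * D)⁻¹).PosDef := hγP.inv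
    have hXpsd : X.PosSemidef := by
      have h4 : X = (Dᵀ * P)ᴴ * (γ ^ 2 • (1 : Matrix (Fin d) (Fin d) ℝ) - Dᵀ * P * D)⁻¹
          * (Dᵀ * P) := by
        have hPt : Pᵀ = P := by
          rw [← Matrix.conjTranspose_eq_transpose_of_trivial]; exact hP.1
        rw [hX, Matrix.conjTranspose_mul, Matrix.conjTranspose_eq_transpose_of_trivial,
          Matrix.conjTranspose_eq_transpose_of_trivial, Matrix.transpose_transpose, hPt]
        simp only [Matrix.mul_assoc]
      rw [h4]
      exact hMinv.posSemidef.conjTranspose_mul_mul_same (Dᵀ * P)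
    have h5 : Sᵀ ^ (i + 1) * X * S ^ (i + 1) = (S ^ (i + 1))ᴴ * X * S ^ (i + 1) := by
      rw [Matrix.conjTranspose_eq_transpose_of_trivial, Matrix.transpose_pow]
    rw [h5]
    exact hXpsd.conjTranspose_mul_mul_same _⟩
end

section
/- Let A be n×n, B n×m, K m×n, D n×d real matrices and γ > 0. Suppose Q̄ is a real symmetric positive definite n×n matrix, R̄ is a real symmetric positive definite m×m matrix, and P is a real symmetric positive semidefinite n×n matrix such that γ²I_d − Dᵀ P D is positive definite and P = (A − BK)ᵀ P̃ (A − BK) + Q̄ + Kᵀ R̄ K, where P̃ := P + P D (γ²I_d − Dᵀ P D)⁻¹ Dᵀ P. Define the updated gain K' := (R̄ + Bᵀ P̃ B)⁻¹ Bᵀ P̃ A. Then A − BK' is Schur stable, i.e. every complex eigenvalue of A − BK' has modulus strictly less than 1. -/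
open Matrix ComplexOrder
noncomputable def cm {j k : ℕ} (M : Matrix (Fin j) (Fin k) ℝ) : Matrix (Fin j) (Fin k) ℂ :=
  M.map (algebraMap ℝ ℂ)

lemma cm_mul {j k l : ℕ} (M : Matrix (Fin j) (Fin k) ℝ) (N : Matrix (Fin k) (Fin l) ℝ) :
    cm (M * N) = cm M * cm N :=
  Matrix.map_mul (f := algebraMap ℝ ℂ)

lemma cm_conjTranspose {j k : ℕ} (M : Matrix (Fin j) (Fin k) ℝ) : (cm M)ᴴ = cm Mᵀ := by
  ext i l; simp [cm, conjTranspose_apply]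

open scoped MatrixOrder in
lemma cm_posSemidef {k : ℕ} {M : Matrix (Fin k) (Fin k) ℝ} (hM : M.PosSemidef) :
    (cm M).PosSemidef := by
  obtain ⟨B, hB⟩ := CStarAlgebra.nonneg_iff_eq_star_mul_self.mp hM.nonneg
  have h : cm M = (cm B)ᴴ * cm B := by
    rw [cm_conjTranspose, ← cm_mul]
    exact congrArg cm (by rw [hB]; rfl)
  rw [h]
  exact Matrix.posSemidef_conjTranspose_mul_self _

open scoped MatrixOrder in
lemma cm_posDef {k : ℕ} {M : Matrix (Fin k) (Fin k) ℝ} (hM : M.PosDef) :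
    (cm M).PosDef := by
  refine Matrix.PosDef.of_dotProduct_mulVec_pos (cm_posSemidef hM.posSemidef).1 fun v hv => ?_
  set C := CFC.sqrt M with hC
  have hsq : C * C = M := CFC.sqrt_mul_sqrt_self M hM.posSemidef.nonneg
  have hdet : C.det ≠ 0 := by
    intro h0
    have : M.det = 0 := by rw [← hsq, det_mul, h0, mul_zero]
    exact (ne_of_gt hM.det_pos) this
  have hCc : (cm C).det ≠ 0 := by
    have h2 : (cm C).det = algebraMap ℝ ℂ C.det := (RingHom.map_det _ _).symm
    rw [h2]; simpa using hdet
  have hw : cm C *ᵥ v ≠ 0 := fun h0 =>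
    hCc (Matrix.exists_mulVec_eq_zero_iff.mp ⟨v, hv, h0⟩)
  have hCt : Cᵀ = C := by
    rw [← conjTranspose_eq_transpose_of_trivial]
    exact (CFC.sqrt_nonneg M).posSemidef.1
  have hMc : cm M = (cm C)ᴴ * cm C := by
    rw [cm_conjTranspose, ← cm_mul, hCt, hsq]
  rw [hMc]
  have : star v ⬝ᵥ ((cm C)ᴴ * cm C) *ᵥ v = star (cm C *ᵥ v) ⬝ᵥ (cm C *ᵥ v) := by
    rw [← mulVec_mulVec, dotProduct_mulVec, star_mulVec]
  rw [this]
  exact Matrix.dotProduct_star_self_pos_iff.mpr hw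


lemma lyap {k : ℕ} {S P : Matrix (Fin k) (Fin k) ℝ} (hP : P.PosSemidef)
    (hM : (P - Sᵀ * P * S).PosDef) : SchurStable S := by
  intro μ hμ
  rw [spectrum.mem_iff, Matrix.isUnit_iff_isUnit_det, isUnit_iff_ne_zero, not_not,
    ← Matrix.exists_mulVec_eq_zero_iff] at hμ
  obtain ⟨v, hv, hveq⟩ := hμ
  have heig : cm S *ᵥ v = μ • v := by
    have h2 : (algebraMap ℂ (Matrix (Fin k) (Fin k) ℂ)) μ *ᵥ v = μ • v := by
      simp [Matrix.algebraMap_eq_diagonal]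
      funext i; simp [Matrix.mulVec_diagonal]
    rw [Matrix.sub_mulVec, sub_eq_zero] at hveq
    exact hveq ▸ h2
  set p : ℂ := star v ⬝ᵥ (cm P *ᵥ v) with hp
  have hppos : 0 ≤ p := (cm_posSemidef hP).dotProduct_mulVec_nonneg v
  have hq : (0:ℂ) < star v ⬝ᵥ (cm (P - Sᵀ * P * S) *ᵥ v) := (cm_posDef hM).dotProduct_mulVec_pos hv
  have hsub : cm (P - Sᵀ * P * S) = cm P - (cm S)ᴴ * cm P * cm S := by
    have h3 : cm (P - Sᵀ * P * S) = cm P - cm (Sᵀ * P * S) := by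
      simp [cm, Matrix.map_sub]
    rw [h3, cm_mul, cm_mul, cm_conjTranspose]
  have hterm : star v ⬝ᵥ (((cm S)ᴴ * cm P * cm S) *ᵥ v)
      = (starRingEnd ℂ μ * μ) * p := by
    rw [← mulVec_mulVec, ← mulVec_mulVec, dotProduct_mulVec, ← star_mulVec, heig,
      star_smul, smul_dotProduct, mulVec_smul, dotProduct_smul]
    simp [hp, smul_eq_mul]
    ring
  have hqe : star v ⬝ᵥ (cm (P - Sᵀ * P * S) *ᵥ v) = (1 - (starRingEnd ℂ μ * μ)) * p := by
    rw [hsub, Matrix.sub_mulVec, dotProduct_sub, hterm]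
    ring
  rw [hqe] at hq
  have hcm : (1 : ℂ) - starRingEnd ℂ μ * μ = (((1 - ‖μ‖^2 : ℝ)) : ℂ) := by
    rw [mul_comm, Complex.mul_conj]
    push_cast
    norm_num
    simp [Complex.normSq_eq_norm_sq]
  rw [hcm] at hq
  rw [Complex.lt_def] at hq
  rw [Complex.le_def] at hppos
  obtain ⟨hqre, hqim⟩ := hq
  obtain ⟨hpre, hpim⟩ := hppos
  simp only [Complex.mul_re, Complex.ofReal_re, Complex.ofReal_im, Complex.zero_re,
    zero_mul, sub_zero] at hqre
  simp only [Complex.zero_re] at hpre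
  by_contra hcon
  push_neg at hcon
  have h1 : 1 ≤ ‖μ‖^2 := by nlinarith [norm_nonneg μ]
  nlinarith [mul_nonneg (sub_nonneg.mpr h1) hpre]

/-- Step C of the proof of Theorem 1 ('K_{t+1} is stabilizing'): if `Q̄ > 0`,
`R̄ > 0`, `P ≥ 0` solves the modified Riccati equation
`P = (A − BK)ᵀ P̃ (A − BK) + Q̄ + Kᵀ R̄ K` with
`P̃ := P + P D (γ²I − Dᵀ P D)⁻¹ Dᵀ P` and `γ²I − Dᵀ P D > 0`, then the updated
gain `K' := (R̄ + Bᵀ P̃ B)⁻¹ Bᵀ P̃ A` renders `A − BK'` Schur stable. -/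
theorem stmt_4 {n m d : ℕ}
    (A : Matrix (Fin n) (Fin n) ℝ) (B : Matrix (Fin n) (Fin m) ℝ)
    (K : Matrix (Fin m) (Fin n) ℝ) (D : Matrix (Fin n) (Fin d) ℝ)
    (γ : ℝ) (hγ : 0 < γ)
    (Qbar : Matrix (Fin n) (Fin n) ℝ) (hQ : Qbar.PosDef)
    (Rbar : Matrix (Fin m) (Fin m) ℝ) (hR : Rbar.PosDef)
    (P : Matrix (Fin n) (Fin n) ℝ) (hP : P.PosSemidef)
    (hγP : (γ ^ 2 • (1 : Matrix (Fin d) (Fin d) ℝ) - Dᵀ * P * D).PosDef)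
    (Ptil : Matrix (Fin n) (Fin n) ℝ)
    (hPtil : Ptil = P + P * D * (γ ^ 2 • (1 : Matrix (Fin d) (Fin d) ℝ) - Dᵀ * P * D)⁻¹ * Dᵀ * P)
    (hRic : P = (A - B * K)ᵀ * Ptil * (A - B * K) + Qbar + Kᵀ * Rbar * K)
    (K' : Matrix (Fin m) (Fin n) ℝ)
    (hK' : K' = (Rbar + Bᵀ * Ptil * B)⁻¹ * (Bᵀ * Ptil * A)) :
    SchurStable (A - B * K') := by
  set Δ : Matrix (Fin d) (Fin d) ℝ := γ ^ 2 • (1 : Matrix (Fin d) (Fin d) ℝ) - Dᵀ * P * D with hΔ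
  have hΔi : (Δ⁻¹).PosDef := hγP.inv
  have hPsymm : Pᵀ = P := by
    rw [← conjTranspose_eq_transpose_of_trivial]; exact hP.isHermitian
  -- Ptil - P is PSD
  have hcorr : Ptil - P = (Dᵀ * P)ᴴ * Δ⁻¹ * (Dᵀ * P) := by
    rw [hPtil, conjTranspose_eq_transpose_of_trivial, transpose_mul, transpose_transpose, hPsymm]
    simp [Matrix.mul_assoc]
  have hPtdiff : (Ptil - P).PosSemidef := by
    rw [hcorr]; exact hΔi.posSemidef.conjTranspose_mul_mul_same _
  have hPt : Ptil.PosSemidef := by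
    have := hP.add hPtdiff
    simpa using this
  have hPtsymm : Ptilᵀ = Ptil := by
    rw [← conjTranspose_eq_transpose_of_trivial]; exact hPt.isHermitian
  set G : Matrix (Fin m) (Fin m) ℝ := Rbar + Bᵀ * Ptil * B with hG
  have hGpd : G.PosDef := by
    apply hR.add_posSemidef
    rw [← conjTranspose_eq_transpose_of_trivial]
    exact hPt.conjTranspose_mul_mul_same _
  have hGsymm : Gᵀ = G := by
    rw [← conjTranspose_eq_transpose_of_trivial]; exact hGpd.isHermitian
  have hGK' : G * K' = Bᵀ * Ptil * A := by
    rw [hK', ← Matrix.mul_assoc, Matrix.mul_nonsing_inv _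
      ((Matrix.isUnit_iff_isUnit_det G).mp hGpd.isUnit), Matrix.one_mul]
  set S : Matrix (Fin n) (Fin n) ℝ := A - B * K' with hS
  set E : Matrix (Fin m) (Fin n) ℝ := K - K' with hE
  -- completion of squares identity
  have e1 : Bᵀ * (Ptil * A) = G * K' := by rw [← Matrix.mul_assoc, ← hGK']
  have e2 : ∀ L : Matrix (Fin m) (Fin n) ℝ, Aᵀ * (Ptil * (B * L)) = K'ᵀ * (G * L) := by
    intro L
    have h2 : Aᵀ * (Ptil * B) = K'ᵀ * G := by
      have := congrArg Matrix.transpose hGK'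
      rw [transpose_mul, transpose_mul, transpose_mul, hPtsymm, transpose_transpose,
        hGsymm] at this
      exact this.symm
    calc Aᵀ * (Ptil * (B * L)) = (Aᵀ * (Ptil * B)) * L := by
          simp [Matrix.mul_assoc]
      _ = K'ᵀ * (G * L) := by rw [h2, Matrix.mul_assoc]
  have e3 : ∀ L : Matrix (Fin m) (Fin n) ℝ, Bᵀ * (Ptil * (B * L)) = G * L - Rbar * L := by
    intro L
    calc Bᵀ * (Ptil * (B * L)) = (Bᵀ * Ptil * B) * L := by
          simp [Matrix.mul_assoc]
      _ = (G - Rbar) * L := by rw [hG]; congr 1; abel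
      _ = G * L - Rbar * L := by rw [Matrix.sub_mul]
  have key : (A - B * K)ᵀ * Ptil * (A - B * K) + Kᵀ * Rbar * K
      = Sᵀ * Ptil * S + K'ᵀ * Rbar * K' + Eᵀ * G * E := by
    rw [hS, hE]
    simp only [transpose_sub, transpose_mul, Matrix.sub_mul, Matrix.mul_sub, Matrix.mul_assoc]
    simp only [e1, e2, e3]
    simp only [Matrix.sub_mul, Matrix.mul_sub, Matrix.mul_assoc]
    abel
  -- Lyapunov inequality
  have hPeq : P = Sᵀ * Ptil * S + K'ᵀ * Rbar * K' + Eᵀ * G * E + Qbar := by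
    rw [hRic]
    rw [show (A - B * K)ᵀ * Ptil * (A - B * K) + Qbar + Kᵀ * Rbar * K
      = ((A - B * K)ᵀ * Ptil * (A - B * K) + Kᵀ * Rbar * K) + Qbar by abel, key]
  have hMeq : P - Sᵀ * P * S
      = Sᵀ * (Ptil - P) * S + K'ᵀ * Rbar * K' + Eᵀ * G * E + Qbar := by
    nth_rewrite 1 [hPeq]
    simp only [Matrix.sub_mul, Matrix.mul_sub]
    abel
  have hMpd : (P - Sᵀ * P * S).PosDef := by
    rw [hMeq]
    have s1 : (Sᵀ * (Ptil - P) * S).PosSemidef := by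
      rw [← conjTranspose_eq_transpose_of_trivial]
      exact hPtdiff.conjTranspose_mul_mul_same _
    have s2 : (K'ᵀ * Rbar * K').PosSemidef := by
      rw [← conjTranspose_eq_transpose_of_trivial]
      exact hR.posSemidef.conjTranspose_mul_mul_same _
    have s3 : (Eᵀ * G * E).PosSemidef := by
      rw [← conjTranspose_eq_transpose_of_trivial]
      exact hGpd.posSemidef.conjTranspose_mul_mul_same _
    exact Matrix.PosDef.posSemidef_add ((s1.add s2).add s3) hQ
  exact lyap hP hMpd
end

section
/- Let A be n×n, B n×m, and K m×n real matrices such that A − BK is Schur stable. Then there exist κ > 0 and ε ∈ (0,1], an invertible real n×n matrix H, and a real n×n matrix L such that A − BK = H L H⁻¹, ‖L‖ ≤ 1 − ε, ‖H‖·‖H⁻¹‖ ≤ κ, and ‖K‖ ≤ κ; that is, every stabilizing policy K is (κ, ε)-strongly stable for some κ, ε. -/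
open Matrix
open scoped NNReal ENNReal

/-- The spectral norm (operator 2-norm) of a real matrix. -/
noncomputable def specNorm {m n : ℕ} (M : Matrix (Fin m) (Fin n) ℝ) : ℝ :=
  ‖LinearMap.toContinuousLinearMap (Matrix.toEuclideanLin M)‖

namespace StrongStabAux

lemma euclid_norm_sq {n : ℕ} (x : Fin n → ℝ) :
    ‖(WithLp.equiv 2 (Fin n → ℝ)).symm x‖ ^ 2 = x ⬝ᵥ x := by
  rw [EuclideanSpace.norm_eq]
  rw [Real.sq_sqrt (by positivity)]
  simp [dotProduct, sq]

lemma dot_self_nonneg {n : ℕ} (v : Fin n → ℝ) : 0 ≤ v ⬝ᵥ v :=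
  Finset.sum_nonneg fun i _ => mul_self_nonneg _

lemma dot_self_pos {n : ℕ} {v : Fin n → ℝ} (hv : v ≠ 0) : 0 < v ⬝ᵥ v :=
  lt_of_le_of_ne (dot_self_nonneg v)
    (fun h => hv (dotProduct_self_eq_zero.mp h.symm))

lemma specNorm_le_iff {n m : ℕ} {G : Matrix (Fin m) (Fin n) ℝ} {c : ℝ} (hc : 0 ≤ c) :
    specNorm G ≤ c ↔ ∀ x : Fin n → ℝ, (G *ᵥ x) ⬝ᵥ (G *ᵥ x) ≤ c ^ 2 * (x ⬝ᵥ x) := by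
  constructor
  · intro h x
    have hx := (LinearMap.toContinuousLinearMap (Matrix.toEuclideanLin G)).le_opNorm
      ((WithLp.equiv 2 (Fin n → ℝ)).symm x)
    have h2 : (LinearMap.toContinuousLinearMap (Matrix.toEuclideanLin G))
        ((WithLp.equiv 2 (Fin n → ℝ)).symm x) = (WithLp.equiv 2 (Fin m → ℝ)).symm (G *ᵥ x) := by
      simp [Matrix.toEuclideanLin_apply]
    rw [h2] at hx
    have hn : ‖LinearMap.toContinuousLinearMap (Matrix.toEuclideanLin G)‖ ≤ c := h
    have h3 : ‖(WithLp.equiv 2 (Fin m → ℝ)).symm (G *ᵥ x)‖ ≤ c * ‖(WithLp.equiv 2 (Fin n → ℝ)).symm x‖ :=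
      hx.trans (mul_le_mul_of_nonneg_right hn (norm_nonneg _))
    calc (G *ᵥ x) ⬝ᵥ (G *ᵥ x) = ‖(WithLp.equiv 2 (Fin m → ℝ)).symm (G *ᵥ x)‖ ^ 2 :=
          (euclid_norm_sq _).symm
      _ ≤ (c * ‖(WithLp.equiv 2 (Fin n → ℝ)).symm x‖) ^ 2 := by
          apply sq_le_sq' <;> nlinarith [norm_nonneg ((WithLp.equiv 2 (Fin m → ℝ)).symm (G *ᵥ x))]
      _ = c ^ 2 * (x ⬝ᵥ x) := by rw [mul_pow, euclid_norm_sq]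
  · intro h
    apply ContinuousLinearMap.opNorm_le_bound _ hc
    intro v
    set x : Fin n → ℝ := WithLp.equiv 2 (Fin n → ℝ) v with hxdef
    have hv : v = (WithLp.equiv 2 (Fin n → ℝ)).symm x := rfl
    rw [hv]
    have h2 : (LinearMap.toContinuousLinearMap (Matrix.toEuclideanLin G))
        ((WithLp.equiv 2 (Fin n → ℝ)).symm x) = (WithLp.equiv 2 (Fin m → ℝ)).symm (G *ᵥ x) := by
      simp [Matrix.toEuclideanLin_apply]
    rw [h2]
    have h3 := h x
    have e1 := euclid_norm_sq (G *ᵥ x)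
    have e2 := euclid_norm_sq x
    nlinarith [norm_nonneg ((WithLp.equiv 2 (Fin m → ℝ)).symm (G *ᵥ x)),
      norm_nonneg ((WithLp.equiv 2 (Fin n → ℝ)).symm x),
      mul_nonneg hc (norm_nonneg ((WithLp.equiv 2 (Fin n → ℝ)).symm x))]

lemma specNorm_le_complex {n : ℕ} (R : Matrix (Fin n) (Fin n) ℝ) :
    specNorm R ≤ ‖toEuclideanCLM (𝕜 := ℂ) (R.map (algebraMap ℝ ℂ))‖ := by
  set T := toEuclideanCLM (𝕜 := ℂ) (R.map (algebraMap ℝ ℂ)) with hT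
  apply ContinuousLinearMap.opNorm_le_bound _ (norm_nonneg T)
  intro v
  set x : Fin n → ℝ := WithLp.equiv 2 (Fin n → ℝ) v with hxdef
  have hv : v = (WithLp.equiv 2 (Fin n → ℝ)).symm x := rfl
  set z : EuclideanSpace ℂ (Fin n) := (WithLp.equiv 2 (Fin n → ℂ)).symm (fun i => (x i : ℂ)) with hz
  have hzn : ‖z‖ = ‖v‖ := by
    rw [hv, EuclideanSpace.norm_eq, EuclideanSpace.norm_eq]
    simp [hz, Complex.norm_real, sq_abs]
  have hTz : T z = (WithLp.equiv 2 (Fin n → ℂ)).symm (fun i => ((R *ᵥ x) i : ℂ)) := by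
    rw [hz, hT]
    show WithLp.toLp 2 _ = WithLp.toLp 2 _
    congr 1
    funext i
    simp only [Matrix.toLin'_apply, Matrix.mulVec, dotProduct, Matrix.map_apply]
    push_cast
    rfl
  have hTzn : ‖T z‖ = ‖(LinearMap.toContinuousLinearMap (Matrix.toEuclideanLin R)) v‖ := by
    have h2 : (LinearMap.toContinuousLinearMap (Matrix.toEuclideanLin R)) v
        = (WithLp.equiv 2 (Fin n → ℝ)).symm (R *ᵥ x) := by
      rw [hv]; simp [Matrix.toEuclideanLin_apply]
    rw [hTz, h2, EuclideanSpace.norm_eq, EuclideanSpace.norm_eq]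
    simp [Complex.norm_real, sq_abs]
  calc ‖(LinearMap.toContinuousLinearMap (Matrix.toEuclideanLin R)) v‖ = ‖T z‖ := hTzn.symm
    _ ≤ ‖T‖ * ‖z‖ := T.le_opNorm z
    _ = ‖T‖ * ‖v‖ := by rw [hzn]

lemma exists_pow_lt_one {n : ℕ} (S : Matrix (Fin n) (Fin n) ℝ)
    (hS : SchurStable S) : ∃ N : ℕ, 1 ≤ N ∧ specNorm (S ^ N) < 1 := by
  set M := S.map (algebraMap ℝ ℂ) with hM
  set T := toEuclideanCLM (𝕜 := ℂ) M with hT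
  have hspec : spectrum ℂ T = spectrum ℂ M :=
    AlgEquiv.spectrum_eq (toEuclideanCLM (𝕜 := ℂ) (n := Fin n)) M
  have hrad : spectralRadius ℂ T < 1 := by
    obtain ⟨r, hr1, hr⟩ : ∃ r : ℝ≥0, r < 1 ∧ ∀ μ ∈ spectrum ℂ T, ‖μ‖₊ ≤ r := by
      by_cases hne : (spectrum ℂ T).Nonempty
      · obtain ⟨μ₀, hμ₀, hmax⟩ := (spectrum.isCompact T).exists_isMaxOn hne
          (continuous_norm.continuousOn (s := spectrum ℂ T))
        refine ⟨‖μ₀‖₊, ?_, fun μ hμ => ?_⟩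
        · have := hS μ₀ (by rwa [hspec] at hμ₀)
          simpa [← NNReal.coe_lt_coe] using this
        · exact hmax hμ
      · exact ⟨0, by norm_num, fun μ hμ => absurd ⟨μ, hμ⟩ hne⟩
    calc spectralRadius ℂ T ≤ (r : ℝ≥0∞) := by
          rw [spectralRadius]
          exact iSup₂_le fun μ hμ => by exact_mod_cast hr μ hμ
      _ < 1 := by exact_mod_cast hr1
  have hgel := spectrum.pow_nnnorm_pow_one_div_tendsto_nhds_spectralRadius T
  have hev : ∀ᶠ N : ℕ in Filter.atTop, (‖T ^ N‖₊ : ℝ≥0∞) ^ (1 / N : ℝ) < 1 :=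
    hgel.eventually_lt_const hrad
  obtain ⟨N, hN, hN1⟩ := (hev.and (Filter.eventually_ge_atTop 1)).exists
  have hTN : ‖T ^ N‖ < 1 := by
    by_contra hcon
    push_neg at hcon
    have h1 : (1 : ℝ≥0∞) ≤ (‖T ^ N‖₊ : ℝ≥0∞) := by
      rw [← ENNReal.coe_one, ENNReal.coe_le_coe]
      exact_mod_cast hcon
    have : (1 : ℝ≥0∞) ≤ (‖T ^ N‖₊ : ℝ≥0∞) ^ (1 / N : ℝ) := by
      calc (1:ℝ≥0∞) = 1 ^ (1 / N : ℝ) := (ENNReal.one_rpow _).symm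
        _ ≤ _ := ENNReal.rpow_le_rpow h1 (by positivity)
    exact absurd hN (not_lt.mpr this)
  refine ⟨N, hN1, lt_of_le_of_lt ?_ hTN⟩
  have hmap : (S ^ N).map (algebraMap ℝ ℂ) = M ^ N := by
    rw [hM, ← RingHom.mapMatrix_apply, ← RingHom.mapMatrix_apply, map_pow]
  have hTpow : T ^ N = toEuclideanCLM (𝕜 := ℂ) (M ^ N) := by
    rw [hT, ← map_pow]
  calc specNorm (S ^ N) ≤ ‖toEuclideanCLM (𝕜 := ℂ) ((S ^ N).map (algebraMap ℝ ℂ))‖ :=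
        specNorm_le_complex _
    _ = ‖T ^ N‖ := by rw [hmap, hTpow]

lemma sum_mulVec' {n : ℕ} {ι : Type*} (s : Finset ι) (M : ι → Matrix (Fin n) (Fin n) ℝ)
    (z : Fin n → ℝ) : (∑ k ∈ s, M k) *ᵥ z = ∑ k ∈ s, (M k *ᵥ z) :=
  map_sum (Matrix.mulVec.addMonoidHomLeft z) M s

lemma quadP {n : ℕ} (S : Matrix (Fin n) (Fin n) ℝ) (N : ℕ) (θ : ℝ) (z : Fin n → ℝ) :
    z ⬝ᵥ (∑ k ∈ Finset.range N, ((θ ^ (2*k))⁻¹) • ((Sᵀ)^k * S^k)) *ᵥ z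
      = ∑ k ∈ Finset.range N, (θ ^ (2*k))⁻¹ * ((S^k *ᵥ z) ⬝ᵥ (S^k *ᵥ z)) := by
  rw [sum_mulVec']
  refine (map_sum (AddMonoidHom.mk' (fun u => z ⬝ᵥ u) (fun a b => dotProduct_add z a b))
    (fun k => (((θ ^ (2*k))⁻¹ • ((Sᵀ)^k * S^k)) *ᵥ z)) (Finset.range N)).trans ?_
  refine Finset.sum_congr rfl fun k _ => ?_
  show z ⬝ᵥ (((θ ^ (2*k))⁻¹ • ((Sᵀ)^k * S^k)) *ᵥ z) = _
  rw [smul_mulVec, dotProduct_smul, ← mulVec_mulVec, ← transpose_pow,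
    dotProduct_mulVec, vecMul_transpose]
  rfl

open scoped MatrixOrder Matrix.Norms.L2Operator in
lemma strong_stable_aux {n : ℕ} (S : Matrix (Fin n) (Fin n) ℝ) (hS : SchurStable S) :
    ∃ θ : ℝ, 0 < θ ∧ θ < 1 ∧ ∃ H L : Matrix (Fin n) (Fin n) ℝ, IsUnit H ∧
      S = H * L * H⁻¹ ∧ specNorm L ≤ θ := by
  obtain ⟨N, hN1, hNlt⟩ := exists_pow_lt_one S hS
  set b := max (specNorm (S ^ N)) 2⁻¹ with hbdef
  have hb0 : (0:ℝ) < b := lt_of_lt_of_le (by norm_num) (le_max_right _ _)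
  have hb1 : b < 1 := max_lt hNlt (by norm_num)
  have hble : specNorm (S ^ N) ≤ b := le_max_left _ _
  have hNne : (N:ℝ) ≠ 0 := Nat.cast_ne_zero.mpr (by omega)
  set θ := b ^ ((N:ℝ)⁻¹) with hθdef
  have hθ0 : 0 < θ := Real.rpow_pos_of_pos hb0 _
  have hθ1 : θ < 1 := Real.rpow_lt_one hb0.le hb1 (by positivity)
  have hθN : θ ^ N = b := by
    rw [hθdef, ← Real.rpow_natCast (b ^ ((N:ℝ)⁻¹)) N, ← Real.rpow_mul hb0.le,
      inv_mul_cancel₀ hNne, Real.rpow_one]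
  set P := ∑ k ∈ Finset.range N, ((θ ^ (2*k))⁻¹) • ((Sᵀ)^k * S^k) with hPdef
  have quad : ∀ z : Fin n → ℝ, z ⬝ᵥ P *ᵥ z
      = ∑ k ∈ Finset.range N, (θ ^ (2*k))⁻¹ * ((S^k *ᵥ z) ⬝ᵥ (S^k *ᵥ z)) :=
    fun z => quadP S N θ z
  have hfnonneg : ∀ (z : Fin n → ℝ) (k : ℕ),
      0 ≤ (θ ^ (2*k))⁻¹ * ((S^k *ᵥ z) ⬝ᵥ (S^k *ᵥ z)) :=
    fun z k => mul_nonneg (by positivity) (dot_self_nonneg _)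
  have hPd : P.PosDef := by
    refine Matrix.PosDef.of_dotProduct_mulVec_pos ?_ ?_
    · show Pᴴ = P
      rw [hPdef, conjTranspose_sum]
      refine Finset.sum_congr rfl fun k _ => ?_
      simp [conjTranspose_smul, conjTranspose_mul, conjTranspose_eq_transpose_of_trivial,
        transpose_transpose, transpose_pow, Matrix.mul_assoc]
    · intro x hx
      rw [star_trivial, quad x]
      have h0 : (θ ^ (2*0))⁻¹ * ((S^0 *ᵥ x) ⬝ᵥ (S^0 *ᵥ x)) = x ⬝ᵥ x := by
        simp
      calc (0:ℝ) < x ⬝ᵥ x := dot_self_pos hx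
        _ = (θ ^ (2*0))⁻¹ * ((S^0 *ᵥ x) ⬝ᵥ (S^0 *ᵥ x)) := h0.symm
        _ ≤ _ := Finset.single_le_sum (fun k _ => hfnonneg x k)
              (Finset.mem_range.mpr (by omega))
  set R := CFC.sqrt P with hRdef
  have hRsemi : R.PosSemidef := Matrix.nonneg_iff_posSemidef.mp (CFC.sqrt_nonneg P)
  have hRR : R * R = P := CFC.sqrt_mul_sqrt_self P (Matrix.nonneg_iff_posSemidef.mpr hPd.posSemidef)
  have hRdet : IsUnit R.det := by
    have hdet : R.det * R.det = P.det := by rw [← det_mul, hRR]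
    have hP : IsUnit P.det := (Matrix.isUnit_iff_isUnit_det P).mp hPd.isUnit
    rw [isUnit_iff_ne_zero] at hP ⊢
    intro h
    apply hP
    rw [← hdet, h, mul_zero]
  have hRT : Rᵀ = R := by
    have h := hRsemi.isHermitian
    rwa [Matrix.IsHermitian, conjTranspose_eq_transpose_of_trivial] at h
  have hRinv : R⁻¹ * R = 1 := Matrix.nonsing_inv_mul R hRdet
  have hRinv' : R * R⁻¹ = 1 := Matrix.mul_nonsing_inv R hRdet
  have Rquad : ∀ w : Fin n → ℝ, (R *ᵥ w) ⬝ᵥ (R *ᵥ w) = w ⬝ᵥ P *ᵥ w := by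
    intro w
    conv_rhs => rw [← hRR, ← mulVec_mulVec, dotProduct_mulVec]
    have hw : w ᵥ* R = R *ᵥ w := by
      conv_lhs => rw [← hRT]
      rw [vecMul_transpose]
    rw [hw]
  have key : ∀ z : Fin n → ℝ, (S *ᵥ z) ⬝ᵥ P *ᵥ (S *ᵥ z) ≤ θ^2 * (z ⬝ᵥ P *ᵥ z) := by
    intro z
    rw [quad, quad]
    set f : ℕ → ℝ := fun k => (θ ^ (2*k))⁻¹ * ((S^k *ᵥ z) ⬝ᵥ (S^k *ᵥ z)) with hf
    have hstep : ∀ k, (θ ^ (2*k))⁻¹ * ((S^k *ᵥ (S *ᵥ z)) ⬝ᵥ (S^k *ᵥ (S *ᵥ z)))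
        = θ^2 * f (k+1) := by
      intro k
      rw [hf]
      simp only
      rw [mulVec_mulVec, ← pow_succ]
      have hθne : θ ≠ 0 := ne_of_gt hθ0
      field_simp
      ring
    have hsum1 : ∑ k ∈ Finset.range (N+1), f k = ∑ k ∈ Finset.range N, f (k+1) + f 0 :=
      Finset.sum_range_succ' f N
    have hsum2 : ∑ k ∈ Finset.range (N+1), f k = ∑ k ∈ Finset.range N, f k + f N :=
      Finset.sum_range_succ f N
    have hfN : f N ≤ f 0 := by
      have hb' := (specNorm_le_iff (pow_nonneg hθ0.le N)).mp
        (le_of_le_of_eq hble hθN.symm) z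
      have e : ((θ:ℝ)^N)^2 = θ^(2*N) := by rw [← pow_mul, Nat.mul_comm]
      have hd : (S^N *ᵥ z) ⬝ᵥ (S^N *ᵥ z) ≤ θ^(2*N) * (z ⬝ᵥ z) := by
        rw [← e]; exact hb'
      have hpos : (0:ℝ) < θ^(2*N) := by positivity
      calc f N = (θ^(2*N))⁻¹ * ((S^N *ᵥ z) ⬝ᵥ (S^N *ᵥ z)) := rfl
        _ ≤ (θ^(2*N))⁻¹ * (θ^(2*N) * (z ⬝ᵥ z)) :=
            mul_le_mul_of_nonneg_left hd (by positivity)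
        _ = z ⬝ᵥ z := by field_simp
        _ = f 0 := by simp [hf]
    calc ∑ k ∈ Finset.range N, (θ ^ (2*k))⁻¹ * ((S^k *ᵥ (S *ᵥ z)) ⬝ᵥ (S^k *ᵥ (S *ᵥ z)))
        = ∑ k ∈ Finset.range N, θ^2 * f (k+1) := Finset.sum_congr rfl fun k _ => hstep k
      _ = θ^2 * ∑ k ∈ Finset.range N, f (k+1) := by rw [Finset.mul_sum]
      _ ≤ θ^2 * ∑ k ∈ Finset.range N, f k := by
          apply mul_le_mul_of_nonneg_left _ (sq_nonneg θ)
          have : ∑ k ∈ Finset.range N, f (k+1)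
              = ∑ k ∈ Finset.range N, f k + f N - f 0 := by linarith
          linarith
  refine ⟨θ, hθ0, hθ1, R⁻¹, R * S * R⁻¹, ?_, ?_, ?_⟩
  · rw [Matrix.isUnit_iff_isUnit_det, Matrix.det_nonsing_inv]
    rw [Ring.inverse_eq_inv]
    rw [isUnit_iff_ne_zero] at hRdet ⊢
    exact inv_ne_zero hRdet
  · rw [Matrix.nonsing_inv_nonsing_inv R hRdet]
    have hassoc : R⁻¹ * (R * S * R⁻¹) * R = (R⁻¹ * R) * (S * (R⁻¹ * R)) := by
      simp only [Matrix.mul_assoc]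
    rw [hassoc, hRinv, one_mul, mul_one]
  · rw [specNorm_le_iff hθ0.le]
    intro x
    set y := R⁻¹ *ᵥ x with hy
    have hx : R *ᵥ y = x := by rw [hy, mulVec_mulVec, hRinv', one_mulVec]
    have hLx : (R * S * R⁻¹) *ᵥ x = R *ᵥ (S *ᵥ y) := by
      rw [hy, mulVec_mulVec, mulVec_mulVec, Matrix.mul_assoc]
    calc ((R * S * R⁻¹) *ᵥ x) ⬝ᵥ ((R * S * R⁻¹) *ᵥ x)
        = (R *ᵥ (S *ᵥ y)) ⬝ᵥ (R *ᵥ (S *ᵥ y)) := by rw [hLx]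
      _ = (S *ᵥ y) ⬝ᵥ P *ᵥ (S *ᵥ y) := Rquad _
      _ ≤ θ^2 * (y ⬝ᵥ P *ᵥ y) := key y
      _ = θ^2 * ((R *ᵥ y) ⬝ᵥ (R *ᵥ y)) := by rw [Rquad]
      _ = θ^2 * (x ⬝ᵥ x) := by rw [hx]

end StrongStabAux

/-- Proposition 1 of the paper: every stabilizing policy `K` (i.e. one with
`A − BK` Schur stable) is `(κ, ε)`-strongly stable for some `κ > 0` and
`ε ∈ (0,1]`: there are matrices `H` (invertible) and `L` with
`A − BK = H L H⁻¹`, `‖L‖ ≤ 1 − ε`, `‖H‖·‖H⁻¹‖ ≤ κ`, and `‖K‖ ≤ κ`. -/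
theorem stmt_5 {n m : ℕ}
    (A : Matrix (Fin n) (Fin n) ℝ) (B : Matrix (Fin n) (Fin m) ℝ)
    (K : Matrix (Fin m) (Fin n) ℝ)
    (hS : SchurStable (A - B * K)) :
    ∃ κ > (0 : ℝ), ∃ ε : ℝ, 0 < ε ∧ ε ≤ 1 ∧
      ∃ H L : Matrix (Fin n) (Fin n) ℝ, IsUnit H ∧
        A - B * K = H * L * H⁻¹ ∧
        specNorm L ≤ 1 - ε ∧
        specNorm H * specNorm H⁻¹ ≤ κ ∧
        specNorm K ≤ κ := by
  obtain ⟨θ, hθ0, hθ1, H, L, hH, heq, hL⟩ := StrongStabAux.strong_stable_aux (A - B * K) hS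
  have hKnn : 0 ≤ specNorm K := norm_nonneg _
  have hcond : 0 ≤ specNorm H * specNorm H⁻¹ := mul_nonneg (norm_nonneg _) (norm_nonneg _)
  refine ⟨max (specNorm H * specNorm H⁻¹) (specNorm K) + 1, ?_, 1 - θ, by linarith, by linarith,
    H, L, hH, heq, by linarith, ?_, ?_⟩
  · have := le_max_right (specNorm H * specNorm H⁻¹) (specNorm K)
    linarith
  · have := le_max_left (specNorm H * specNorm H⁻¹) (specNorm K)
    linarith
  · have := le_max_right (specNorm H * specNorm H⁻¹) (specNorm K)
    linarith
end

section
/- Let 0 < μ ≤ ν, P a real symmetric n×n matrix with μI ≤ P ≤ νI, and S a real n×n matrix such that Sᵀ P S ≤ P − μI. Then, writing P^{1/2} for the (unique) symmetric positive definite square root of P, the spectral norm satisfies ‖P^{1/2} S P^{-1/2}‖ ≤ √(1 − μ/ν) ≤ 1 − μ/(2ν). -/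
open Matrix

private lemma dot_sq {n : ℕ} (A : Matrix (Fin n) (Fin n) ℝ) (y : Fin n → ℝ) :
    (A *ᵥ y) ⬝ᵥ (A *ᵥ y) = y ⬝ᵥ ((Aᵀ * A) *ᵥ y) := by
  rw [← Matrix.mulVec_mulVec, Matrix.dotProduct_mulVec (A := Aᵀ),
    Matrix.vecMul_transpose]

/-- The contraction estimate behind Proposition 2: if `0 < μ ≤ ν`,
`μI ≤ P ≤ νI` with `P` symmetric, and `Sᵀ P S ≤ P − μI`, then for the
(unique) symmetric positive definite square root `P^{1/2}` of `P`,
`‖P^{1/2} S P^{-1/2}‖ ≤ √(1 − μ/ν) ≤ 1 − μ/(2ν)`. -/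
theorem stmt_7 {n : ℕ} (μ ν : ℝ) (hμ : 0 < μ) (hμν : μ ≤ ν)
    (P : Matrix (Fin n) (Fin n) ℝ) (hPsymm : P.IsSymm)
    (hPμ : (P - μ • (1 : Matrix (Fin n) (Fin n) ℝ)).PosSemidef)
    (hPν : (ν • (1 : Matrix (Fin n) (Fin n) ℝ) - P).PosSemidef)
    (S : Matrix (Fin n) (Fin n) ℝ)
    (hLyap : (P - μ • (1 : Matrix (Fin n) (Fin n) ℝ) - Sᵀ * P * S).PosSemidef)
    (Phalf : Matrix (Fin n) (Fin n) ℝ) (hPhalf : Phalf.PosDef)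
    (hPhalfSq : Phalf * Phalf = P) :
    specNorm (Phalf * S * Phalf⁻¹) ≤ Real.sqrt (1 - μ / ν) ∧
    Real.sqrt (1 - μ / ν) ≤ 1 - μ / (2 * ν) := by
  have hν : 0 < ν := lt_of_lt_of_le hμ hμν
  have hc : 0 ≤ 1 - μ / ν := by
    have : μ / ν ≤ 1 := (div_le_one hν).mpr hμν
    linarith
  constructor
  · -- operator norm bound
    have hPhalfT : Phalfᵀ = Phalf := by
      have := hPhalf.1
      simpa [Matrix.IsHermitian, Matrix.conjTranspose_eq_transpose_of_trivial] using this
    have hdet : IsUnit Phalf.det := hPhalf.det_pos.ne'.isUnit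
    have hinv : Phalf * Phalf⁻¹ = 1 := Matrix.mul_nonsing_inv _ hdet
    refine ContinuousLinearMap.opNorm_le_bound _ (Real.sqrt_nonneg _) fun v => ?_
    set w : Fin n → ℝ := (WithLp.equiv 2 (Fin n → ℝ)) v with hw
    set y : Fin n → ℝ := Phalf⁻¹ *ᵥ w with hy
    have hwy : Phalf *ᵥ y = w := by
      rw [hy, Matrix.mulVec_mulVec, hinv, Matrix.one_mulVec]
    -- norms as dot products
    have hnv : ‖v‖ ^ 2 = w ⬝ᵥ w := by
      have h1 : (inner ℝ v v : ℝ) = ‖v‖ ^ 2 := real_inner_self_eq_norm_sq v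
      have h2 : (inner ℝ v v : ℝ) = w ⬝ᵥ w := by
        rw [EuclideanSpace.inner_eq_star_dotProduct]
        simp [hw]
      rw [← h1, h2]
    have hLv : ‖(LinearMap.toContinuousLinearMap
        (Matrix.toEuclideanLin (Phalf * S * Phalf⁻¹))) v‖ ^ 2
        = y ⬝ᵥ ((Sᵀ * P * S) *ᵥ y) := by
      set u := (Matrix.toEuclideanLin (Phalf * S * Phalf⁻¹)) v with hu
      have h1 : (inner ℝ u u : ℝ) = ‖u‖ ^ 2 := real_inner_self_eq_norm_sq u
      have h2 : (inner ℝ u u : ℝ)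
          = ((Phalf * S) *ᵥ y) ⬝ᵥ ((Phalf * S) *ᵥ y) := by
        rw [EuclideanSpace.inner_eq_star_dotProduct]
        have h3 : (WithLp.equiv 2 (Fin n → ℝ)) u = (Phalf * S) *ᵥ y := by
          rw [hu]
          change (Phalf * S * Phalf⁻¹) *ᵥ w = _
          rw [← Matrix.mulVec_mulVec, ← hy]
        simp [show u.ofLp = (Phalf * S) *ᵥ y from h3]
      have h4 : ((Phalf * S) *ᵥ y) ⬝ᵥ ((Phalf * S) *ᵥ y)
          = y ⬝ᵥ ((Sᵀ * P * S) *ᵥ y) := by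
        rw [dot_sq]
        have : (Phalf * S)ᵀ * (Phalf * S) = Sᵀ * P * S := by
          rw [Matrix.transpose_mul, hPhalfT, ← hPhalfSq]
          simp [Matrix.mul_assoc]
        rw [this]
      simp only [LinearMap.coe_toContinuousLinearMap']
      rw [← hu, ← h1, h2, h4]
    -- scalar quadratic form inequalities
    have hlyap := hLyap.dotProduct_mulVec_nonneg y
    have hnu := hPν.dotProduct_mulVec_nonneg y
    simp only [star_trivial, Matrix.sub_mulVec, Matrix.smul_mulVec,
      Matrix.one_mulVec, dotProduct_sub, dotProduct_smul,
      smul_eq_mul, sub_nonneg] at hlyap hnu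
    have hPyw : y ⬝ᵥ (P *ᵥ y) = w ⬝ᵥ w := by
      have hd := dot_sq Phalf y
      rw [hPhalfT, hPhalfSq] at hd
      rw [← hd, hwy]
    have key : ‖(LinearMap.toContinuousLinearMap
        (Matrix.toEuclideanLin (Phalf * S * Phalf⁻¹))) v‖ ^ 2
        ≤ (1 - μ / ν) * ‖v‖ ^ 2 := by
      rw [hLv, hnv, ← hPyw]
      set a := y ⬝ᵥ (P *ᵥ y)
      set t := y ⬝ᵥ y
      set b := y ⬝ᵥ ((Sᵀ * P * S) *ᵥ y)
      have h1 : b ≤ a - μ * t := by linarith [hlyap]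
      have h2 : a ≤ ν * t := hnu
      have h3 : (1 - μ / ν) * a - b = (a - μ * t - b) + (μ / ν) * (ν * t - a) := by
        field_simp
        ring
      nlinarith [mul_nonneg (le_of_lt (div_pos hμ hν)) (sub_nonneg.mpr h2)]
    have hnorm : 0 ≤ ‖(LinearMap.toContinuousLinearMap
        (Matrix.toEuclideanLin (Phalf * S * Phalf⁻¹))) v‖ := norm_nonneg _
    have hrhs : (0:ℝ) ≤ Real.sqrt (1 - μ / ν) * ‖v‖ :=
      mul_nonneg (Real.sqrt_nonneg _) (norm_nonneg _)
    have hsq : (Real.sqrt (1 - μ / ν) * ‖v‖) ^ 2 = (1 - μ / ν) * ‖v‖ ^ 2 := by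
      rw [mul_pow, Real.sq_sqrt hc]
    nlinarith [key, hsq, hnorm, hrhs]
  · -- √(1 - μ/ν) ≤ 1 - μ/(2ν)
    have h1 : 1 - μ / ν ≤ (1 - μ / (2 * ν)) ^ 2 := by
      have h2 : (1 - μ / (2 * ν)) ^ 2 = 1 - μ / ν + (μ / (2 * ν)) ^ 2 := by
        field_simp
        ring
      nlinarith [sq_nonneg (μ / (2 * ν))]
    have h3 : 0 ≤ 1 - μ / (2 * ν) := by
      have : μ / (2 * ν) ≤ 1 := by
        rw [div_le_one (by positivity)]
        linarith
      linarith
    calc Real.sqrt (1 - μ / ν) ≤ Real.sqrt ((1 - μ / (2 * ν)) ^ 2) :=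
          Real.sqrt_le_sqrt h1
      _ = 1 - μ / (2 * ν) := Real.sqrt_sq h3
end

section
/- Let 0 < μ ≤ ν and let P, P' be real symmetric n×n matrices with μI ≤ P ≤ νI, μI ≤ P' ≤ νI, and spectral norm ‖P − P'‖ ≤ μ²/ν. Then, writing M^{1/2} for the symmetric positive definite square root, ‖P'^{-1/2} P^{1/2}‖ ≤ 1 + μ/(2ν). -/
open Matrix

open scoped Matrix.Norms.L2Operator

lemma sn_eq {n : ℕ} (M : Matrix (Fin n) (Fin n) ℝ) : specNorm M = ‖M‖ := rfl

lemma psd_inner {n : ℕ} {M : Matrix (Fin n) (Fin n) ℝ} (hM : M.PosSemidef)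
    (x : EuclideanSpace ℝ (Fin n)) :
    0 ≤ (inner ℝ x (Matrix.toEuclideanCLM (𝕜 := ℝ) M x) : ℝ) := by
  have h := hM.dotProduct_mulVec_nonneg (WithLp.ofLp x)
  rw [Matrix.inner_toEuclideanCLM]
  simpa using h

lemma le_of_sq_le_sq' {a b : ℝ} (ha : 0 ≤ a) (hb : 0 ≤ b) (h : a ^ 2 ≤ b ^ 2) : a ≤ b := by
  nlinarith

lemma norm_inv_half_le {n : ℕ} {μ : ℝ} (hμ : 0 < μ) {P' H : Matrix (Fin n) (Fin n) ℝ}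
    (hH : H.PosDef) (hHsq : H * H = P')
    (hP'μ : (P' - μ • (1 : Matrix (Fin n) (Fin n) ℝ)).PosSemidef) :
    ‖H⁻¹‖ ≤ (Real.sqrt μ)⁻¹ := by
  have hdet : IsUnit H.det := hH.det_pos.ne'.isUnit
  rw [Matrix.cstar_norm_def]
  refine ContinuousLinearMap.opNorm_le_bound _ (by positivity) fun x => ?_
  set w := Matrix.toEuclideanCLM (𝕜 := ℝ) H⁻¹ x with hw
  have hHw : Matrix.toEuclideanCLM (𝕜 := ℝ) H w = x := by
    have h1 : Matrix.toEuclideanCLM (𝕜 := ℝ) (H * H⁻¹) x = x := by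
      rw [Matrix.mul_nonsing_inv _ hdet, _root_.map_one, ContinuousLinearMap.one_apply]
    rw [hw, ← ContinuousLinearMap.comp_apply, ← ContinuousLinearMap.mul_def, ← _root_.map_mul]
    exact h1
  have hsa : star (Matrix.toEuclideanCLM (𝕜 := ℝ) H) = Matrix.toEuclideanCLM (𝕜 := ℝ) H := by
    rw [← map_star, Matrix.star_eq_conjTranspose, hH.isHermitian]
  have h2 : (inner ℝ w (Matrix.toEuclideanCLM (𝕜 := ℝ) P' w) : ℝ) = ‖x‖ ^ 2 := by
    have hmul : Matrix.toEuclideanCLM (𝕜 := ℝ) P' =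
        Matrix.toEuclideanCLM (𝕜 := ℝ) H * Matrix.toEuclideanCLM (𝕜 := ℝ) H := by
      rw [← _root_.map_mul, hHsq]
    rw [hmul, ContinuousLinearMap.mul_apply]
    rw [show Matrix.toEuclideanCLM (𝕜 := ℝ) H =
      ContinuousLinearMap.adjoint (Matrix.toEuclideanCLM (𝕜 := ℝ) H) from
        by rw [← ContinuousLinearMap.star_eq_adjoint, hsa]]
    rw [ContinuousLinearMap.adjoint_inner_right]
    rw [← ContinuousLinearMap.star_eq_adjoint, hsa, hHw, real_inner_self_eq_norm_sq]
  have h1 : 0 ≤ (inner ℝ w (Matrix.toEuclideanCLM (𝕜 := ℝ) (P' - μ • 1) w) : ℝ) :=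
    psd_inner hP'μ w
  have h3 : (inner ℝ w (Matrix.toEuclideanCLM (𝕜 := ℝ) (P' - μ • 1) w) : ℝ)
      = ‖x‖ ^ 2 - μ * ‖w‖ ^ 2 := by
    rw [_root_.map_sub, ContinuousLinearMap.sub_apply, inner_sub_right, h2, _root_.map_smul,
      ContinuousLinearMap.smul_apply, inner_smul_right, _root_.map_one,
      ContinuousLinearMap.one_apply, real_inner_self_eq_norm_sq]
  have key : μ * ‖w‖ ^ 2 ≤ ‖x‖ ^ 2 := by rw [h3] at h1; linarith
  have hsqrt : 0 < Real.sqrt μ := Real.sqrt_pos.2 hμ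
  refine le_of_sq_le_sq' (norm_nonneg _) (by positivity) ?_
  rw [mul_pow, inv_pow, Real.sq_sqrt hμ.le, inv_mul_eq_div, le_div_iff₀ hμ]
  linarith

/-- The sequential-strong-stability estimate in Proposition 2: if `0 < μ ≤ ν`,
`μI ≤ P ≤ νI`, `μI ≤ P' ≤ νI` (both symmetric), and `‖P − P'‖ ≤ μ²/ν`, then
for the symmetric positive definite square roots `P^{1/2}`, `P'^{1/2}`,
`‖P'^{-1/2} P^{1/2}‖ ≤ 1 + μ/(2ν)`. -/
theorem stmt_8 {n : ℕ} (μ ν : ℝ) (hμ : 0 < μ) (hμν : μ ≤ ν)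
    (P P' : Matrix (Fin n) (Fin n) ℝ) (hPsymm : P.IsSymm) (hP'symm : P'.IsSymm)
    (hPμ : (P - μ • (1 : Matrix (Fin n) (Fin n) ℝ)).PosSemidef)
    (hPν : (ν • (1 : Matrix (Fin n) (Fin n) ℝ) - P).PosSemidef)
    (hP'μ : (P' - μ • (1 : Matrix (Fin n) (Fin n) ℝ)).PosSemidef)
    (hP'ν : (ν • (1 : Matrix (Fin n) (Fin n) ℝ) - P').PosSemidef)
    (hdiff : specNorm (P - P') ≤ μ ^ 2 / ν)
    (Phalf : Matrix (Fin n) (Fin n) ℝ) (hPhalf : Phalf.PosDef)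
    (hPhalfSq : Phalf * Phalf = P)
    (P'half : Matrix (Fin n) (Fin n) ℝ) (hP'half : P'half.PosDef)
    (hP'halfSq : P'half * P'half = P') :
    specNorm (P'half⁻¹ * Phalf) ≤ 1 + μ / (2 * ν) := by
  have hν : 0 < ν := hμ.trans_le hμν
  rw [sn_eq] at *
  set A := P'half⁻¹ * Phalf with hA
  have hdet' : IsUnit P'half.det := hP'half.det_pos.ne'.isUnit
  have hPhT : Phalfᵀ = Phalf := by
    rw [← Matrix.conjTranspose_eq_transpose_of_trivial, hPhalf.isHermitian]
  have hP'hT : P'halfᵀ = P'half := by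
    rw [← Matrix.conjTranspose_eq_transpose_of_trivial, hP'half.isHermitian]
  have hP'invT : (P'half⁻¹)ᵀ = P'half⁻¹ := by
    rw [Matrix.transpose_nonsing_inv, hP'hT]
  -- the key algebraic identity
  have hAAT : A * Aᵀ = 1 + P'half⁻¹ * (P - P') * P'half⁻¹ := by
    have hinv : P'half * P'half⁻¹ = 1 := Matrix.mul_nonsing_inv _ hdet'
    have hinv' : P'half⁻¹ * P'half = 1 := Matrix.nonsing_inv_mul _ hdet'
    have h1 : Phalf * Phalf = P'half * P'half + (P - P') := by
      rw [hPhalfSq, hP'halfSq]; abel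
    calc A * Aᵀ = P'half⁻¹ * (Phalf * Phalf) * P'half⁻¹ := by
          rw [hA, Matrix.transpose_mul, hP'invT, hPhT]; noncomm_ring
      _ = P'half⁻¹ * (P'half * P'half + (P - P')) * P'half⁻¹ := by rw [h1]
      _ = (P'half⁻¹ * P'half) * (P'half * P'half⁻¹) + P'half⁻¹ * (P - P') * P'half⁻¹ := by
          noncomm_ring
      _ = 1 + P'half⁻¹ * (P - P') * P'half⁻¹ := by rw [hinv, hinv', Matrix.one_mul]
  -- norm of the inverse square root
  have hnorminv : ‖P'half⁻¹‖ ≤ (Real.sqrt μ)⁻¹ := norm_inv_half_le hμ hP'half hP'halfSq hP'μ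
  have hsqrt : 0 < Real.sqrt μ := Real.sqrt_pos.2 hμ
  -- bound on ‖A * Aᵀ‖
  have hone : ‖(1 : Matrix (Fin n) (Fin n) ℝ)‖ ≤ 1 := by
    rw [Matrix.cstar_norm_def, _root_.map_one]
    exact ContinuousLinearMap.norm_id_le
  have hE : ‖P'half⁻¹ * (P - P') * P'half⁻¹‖ ≤ μ / ν := by
    have e1 : ‖P'half⁻¹ * (P - P') * P'half⁻¹‖ ≤ ‖P'half⁻¹‖ * ‖P - P'‖ * ‖P'half⁻¹‖ :=
      le_trans (Matrix.l2_opNorm_mul _ _)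
        (mul_le_mul_of_nonneg_right (Matrix.l2_opNorm_mul _ _) (norm_nonneg _))
    have e2 : ‖P'half⁻¹‖ * ‖P - P'‖ * ‖P'half⁻¹‖ ≤ (Real.sqrt μ)⁻¹ * (μ ^ 2 / ν) * (Real.sqrt μ)⁻¹ := by
      have h1 : ‖P'half⁻¹‖ * ‖P - P'‖ ≤ (Real.sqrt μ)⁻¹ * (μ ^ 2 / ν) :=
        mul_le_mul hnorminv hdiff (norm_nonneg _) (by positivity)
      exact mul_le_mul h1 hnorminv (norm_nonneg _) (by positivity)
    have e3 : (Real.sqrt μ)⁻¹ * (μ ^ 2 / ν) * (Real.sqrt μ)⁻¹ = μ / ν := by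
      have hs : Real.sqrt μ * Real.sqrt μ = μ := Real.mul_self_sqrt hμ.le
      have hμ' : μ ≠ 0 := hμ.ne'
      calc (Real.sqrt μ)⁻¹ * (μ ^ 2 / ν) * (Real.sqrt μ)⁻¹
          = μ ^ 2 * (Real.sqrt μ * Real.sqrt μ)⁻¹ / ν := by ring
        _ = μ ^ 2 * μ⁻¹ / ν := by rw [hs]
        _ = μ / ν := by field_simp [pow_two]
    linarith
  have hAATnorm : ‖A * Aᵀ‖ ≤ 1 + μ / ν := by
    rw [hAAT]
    exact le_trans (norm_add_le _ _) (by linarith)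
  -- C* identity : ‖A‖² = ‖A * Aᵀ‖
  have hCstar : ‖A‖ * ‖A‖ = ‖A * Aᵀ‖ := by
    have h := Matrix.l2_opNorm_conjTranspose_mul_self (Aᵀ)
    rw [Matrix.conjTranspose_eq_transpose_of_trivial, Matrix.transpose_transpose] at h
    have h2 : ‖Aᵀ‖ = ‖A‖ := by
      rw [← Matrix.conjTranspose_eq_transpose_of_trivial]
      exact Matrix.l2_opNorm_conjTranspose A
    rw [h, h2]
  -- finish
  have hfin : (1 : ℝ) + μ / ν ≤ (1 + μ / (2 * ν)) ^ 2 := by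
    have h : (1 + μ / (2 * ν)) ^ 2 = 1 + μ / ν + (μ / (2 * ν)) ^ 2 := by
      field_simp; ring
    rw [h]; nlinarith [sq_nonneg (μ / (2 * ν))]
  refine le_of_sq_le_sq' (norm_nonneg _) (by positivity) ?_
  calc ‖A‖ ^ 2 = ‖A‖ * ‖A‖ := sq ‖A‖
    _ = ‖A * Aᵀ‖ := hCstar
    _ ≤ 1 + μ / ν := hAATnorm
    _ ≤ (1 + μ / (2 * ν)) ^ 2 := hfin
end

section
/- Let S be a real n×n matrix, κ > 0, ε ∈ (0,1], H an invertible real n×n matrix, and L a real n×n matrix such that S = H L H⁻¹, ‖L‖ ≤ 1 − ε, and ‖H‖·‖H⁻¹‖ ≤ κ. Then the series Σ_{i=0}^∞ (Sᵀ)^i S^i converges and ‖Σ_{i=0}^∞ (Sᵀ)^i S^i‖ ≤ κ²/(ε(2 − ε)) ≤ κ²/ε. -/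
open Matrix

open scoped Matrix.Norms.L2Operator in
lemma specNorm_eq {m n : ℕ} (M : Matrix (Fin m) (Fin n) ℝ) : specNorm M = ‖M‖ := rfl

open scoped Matrix.Norms.L2Operator in
lemma l2_norm_transpose {n : ℕ} (M : Matrix (Fin n) (Fin n) ℝ) : ‖Mᵀ‖ = ‖M‖ := by
  rw [← Matrix.conjTranspose_eq_transpose_of_trivial, Matrix.l2_opNorm_conjTranspose]

/-- Equation (22) of the paper: for a matrix `S = H L H⁻¹` coming from a
`(κ, ε)`-strongly stable policy, the series `Σ_{i=0}^∞ (Sᵀ)^i S^i` converges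
and its spectral norm is at most `κ²/(ε(2 − ε)) ≤ κ²/ε`. -/
theorem stmt_10 {n : ℕ} (S : Matrix (Fin n) (Fin n) ℝ)
    (κ ε : ℝ) (hκ : 0 < κ) (hε : 0 < ε) (hε1 : ε ≤ 1)
    (H L : Matrix (Fin n) (Fin n) ℝ) (hH : IsUnit H)
    (hdecomp : S = H * L * H⁻¹)
    (hL : specNorm L ≤ 1 - ε)
    (hHnorm : specNorm H * specNorm H⁻¹ ≤ κ) :
    Summable (fun i : ℕ => Sᵀ ^ i * S ^ i) ∧
    specNorm (∑' i : ℕ, Sᵀ ^ i * S ^ i) ≤ κ ^ 2 / (ε * (2 - ε)) ∧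
    κ ^ 2 / (ε * (2 - ε)) ≤ κ ^ 2 / ε := by
  open scoped Matrix.Norms.L2Operator in
  simp only [specNorm_eq] at hL hHnorm ⊢
  haveI : CompleteSpace (Matrix (Fin n) (Fin n) ℝ) := FiniteDimensional.complete ℝ _
  have hinv : H⁻¹ * H = 1 := Matrix.nonsing_inv_mul H ((Matrix.isUnit_iff_isUnit_det H).mp hH)
  have h1ε : (0:ℝ) ≤ 1 - ε := by linarith
  -- powers of S
  have hSpow : ∀ i : ℕ, S ^ i = H * L ^ i * H⁻¹ := by
    intro i
    induction i with
    | zero =>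
      simp [pow_zero, Matrix.mul_nonsing_inv H ((Matrix.isUnit_iff_isUnit_det H).mp hH)]
    | succ k ih =>
      rw [pow_succ, pow_succ, ih, hdecomp]
      simp only [Matrix.mul_assoc]
      rw [← Matrix.mul_assoc H⁻¹ H, hinv, Matrix.one_mul]
  have hLpow : ∀ i : ℕ, ‖L ^ i‖ ≤ (1 - ε) ^ i := by
    intro i
    induction i with
    | zero =>
      simp only [pow_zero]
      rw [Matrix.cstar_norm_def, _root_.map_one]
      exact ContinuousLinearMap.norm_id_le
    | succ k ih =>
      rw [pow_succ, pow_succ]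
      exact le_trans (norm_mul_le _ _)
        (mul_le_mul ih hL (norm_nonneg _) (pow_nonneg h1ε k))
  have hSbound : ∀ i : ℕ, ‖S ^ i‖ ≤ κ * (1 - ε) ^ i := by
    intro i
    rw [hSpow i]
    calc ‖H * L ^ i * H⁻¹‖ ≤ ‖H * L ^ i‖ * ‖H⁻¹‖ := norm_mul_le _ _
      _ ≤ (‖H‖ * ‖L ^ i‖) * ‖H⁻¹‖ :=
          mul_le_mul_of_nonneg_right (norm_mul_le _ _) (norm_nonneg _)
      _ = (‖H‖ * ‖H⁻¹‖) * ‖L ^ i‖ := by ring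
      _ ≤ κ * (1 - ε) ^ i := by
          apply mul_le_mul hHnorm (hLpow i) (norm_nonneg _)
          exact le_of_lt hκ
  have hterm : ∀ i : ℕ, ‖Sᵀ ^ i * S ^ i‖ ≤ κ ^ 2 * ((1 - ε) ^ 2) ^ i := by
    intro i
    calc ‖Sᵀ ^ i * S ^ i‖ ≤ ‖Sᵀ ^ i‖ * ‖S ^ i‖ := norm_mul_le _ _
      _ = ‖S ^ i‖ * ‖S ^ i‖ := by rw [← Matrix.transpose_pow, l2_norm_transpose]
      _ ≤ (κ * (1 - ε) ^ i) * (κ * (1 - ε) ^ i) :=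
          mul_le_mul (hSbound i) (hSbound i) (norm_nonneg _)
            (mul_nonneg (le_of_lt hκ) (pow_nonneg h1ε i))
      _ = κ ^ 2 * ((1 - ε) ^ i) ^ 2 := by ring
      _ = κ ^ 2 * ((1 - ε) ^ 2) ^ i := by rw [← pow_mul, ← pow_mul]; ring
  have hr : (1 - ε) ^ 2 < 1 := by nlinarith
  have hgeo : Summable (fun i : ℕ => κ ^ 2 * ((1 - ε) ^ 2) ^ i) :=
    (summable_geometric_of_lt_one (by positivity) hr).mul_left _
  have hsum : Summable (fun i : ℕ => Sᵀ ^ i * S ^ i) :=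
    Summable.of_norm_bounded hgeo hterm
  refine ⟨hsum, ?_, ?_⟩
  · have h1 : ‖∑' i : ℕ, Sᵀ ^ i * S ^ i‖ ≤ ∑' i : ℕ, κ ^ 2 * ((1 - ε) ^ 2) ^ i :=
      tsum_of_norm_bounded hgeo.hasSum hterm
    have h2 : ∑' i : ℕ, κ ^ 2 * ((1 - ε) ^ 2) ^ i = κ ^ 2 / (ε * (2 - ε)) := by
      rw [tsum_mul_left, tsum_geometric_of_lt_one (by positivity) hr]
      rw [div_eq_mul_inv]
      congr 1
      ring
    rw [h2] at h1
    exact h1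
  · apply div_le_div_of_nonneg_left (by positivity) hε
    nlinarith
end

section
/- Let n ≥ 1 and let (P_t)_{t≥1} be a sequence of real symmetric n×n matrices, P* a real symmetric n×n matrix, and N a real symmetric positive semidefinite n×n matrix. Let t* and T be integers with 1 ≤ t* ≤ T, and let p* > 0 and c ≥ 0 be reals such that ‖P_t − P_{t−1}‖ ≤ p*/t for every integer t with t* < t ≤ T and ‖P_{t*} − P*‖ ≤ c. Then Tr(P_T N) − Tr(P* N) ≤ Tr(N) · ( c + p* (log T − log t*) ). -/
open Matrix

lemma quad_le {n : ℕ} (X : Matrix (Fin n) (Fin n) ℝ) (r : Fin n → ℝ) :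
    r ⬝ᵥ X.mulVec r ≤ specNorm X * (r ⬝ᵥ r) := by
  set v : EuclideanSpace ℝ (Fin n) := (WithLp.equiv 2 (Fin n → ℝ)).symm r
  set L := LinearMap.toContinuousLinearMap (Matrix.toEuclideanLin X)
  have h1 : r ⬝ᵥ X.mulVec r = inner ℝ v (L v) := by
    simp [v, L, EuclideanSpace.inner_eq_star_dotProduct, Matrix.toEuclideanLin_apply,
      dotProduct_comm]
  have h2 : r ⬝ᵥ r = ‖v‖ ^ 2 := by
    rw [← real_inner_self_eq_norm_sq]
    simp only [v, EuclideanSpace.inner_eq_star_dotProduct]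
    rfl
  rw [h1, h2]
  calc inner ℝ v (L v) ≤ ‖v‖ * ‖L v‖ := real_inner_le_norm _ _
    _ ≤ ‖v‖ * (‖L‖ * ‖v‖) := by
        gcongr; exact L.le_opNorm v
    _ = specNorm X * ‖v‖ ^ 2 := by simp only [specNorm, L]; ring

lemma trace_mul_le {n : ℕ} (X N : Matrix (Fin n) (Fin n) ℝ) (hN : N.PosSemidef) :
    (X * N).trace ≤ specNorm X * N.trace := by
  obtain ⟨C, rfl⟩ : ∃ C : Matrix (Fin n) (Fin n) ℝ, N = Cᴴ * C := by
    open scoped MatrixOrder in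
    obtain ⟨X, hX, -, hXX⟩ := CFC.exists_sqrt_of_isSelfAdjoint_of_quasispectrumRestricts
      (a := N) hN.isHermitian (QuasispectrumRestricts.nnreal_of_nonneg hN.nonneg)
    exact ⟨X, by rw [← hXX]; nth_rewrite 1 [← hX.star_eq]; rfl⟩
  have h1 : (X * (Cᴴ * C)).trace = (C * X * Cᴴ).trace := by
    rw [← Matrix.mul_assoc, Matrix.trace_mul_cycle]
  have h2 : (Cᴴ * C).trace = (C * Cᴴ).trace := Matrix.trace_mul_comm _ _
  rw [h1, h2]
  have hrow : ∀ i, (C * X * Cᴴ) i i = (fun j => C i j) ⬝ᵥ X.mulVec (fun j => C i j) := by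
    intro i
    simp only [Matrix.mul_apply, Matrix.conjTranspose_apply, star_trivial,
      Matrix.mulVec, dotProduct, Finset.sum_mul, Finset.mul_sum]
    rw [Finset.sum_comm]
    congr 1; ext k; congr 1; ext j; ring
  have hrow2 : ∀ i, (C * Cᴴ) i i = (fun j => C i j) ⬝ᵥ (fun j => C i j) := by
    intro i
    simp [Matrix.mul_apply, Matrix.conjTranspose_apply, dotProduct]
  rw [Matrix.trace, Matrix.trace]
  simp only [Matrix.diag_apply]
  rw [Finset.mul_sum]
  apply Finset.sum_le_sum
  intro i _
  rw [hrow i, hrow2 i]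
  exact quad_le X _

lemma harmonic_le_log {a : ℕ} (ha : 1 ≤ a) :
    ∀ b : ℕ, a ≤ b → ∑ t ∈ Finset.Ioc a b, (1 : ℝ) / t ≤ Real.log b - Real.log a := by
  intro b hb
  induction b, hb using Nat.le_induction with
  | base => simp
  | succ b hab ih =>
    rw [Finset.sum_Ioc_succ_top (by omega : a ≤ b)]
    have hb1 : (0:ℝ) < b := by exact_mod_cast Nat.lt_of_lt_of_le Nat.zero_lt_one (le_trans ha hab)
    have hb2 : (0:ℝ) < (b:ℝ) + 1 := by linarith
    have key : (1:ℝ) / ((b:ℝ) + 1) ≤ Real.log ((b:ℝ)+1) - Real.log b := by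
      rw [← Real.log_div (by linarith) (ne_of_gt hb1)]
      have h := Real.add_one_le_exp (1 / ((b:ℝ)+1))
      have : ((b:ℝ)+1)/b = 1 / (1 - 1/((b:ℝ)+1)) := by
        field_simp
        ring_nf
        field_simp
      have hlog : Real.log (((b:ℝ)+1)/b) = - Real.log (b / ((b:ℝ)+1)) := by
        rw [← Real.log_inv]; congr 1; field_simp
      rw [hlog]
      have hle : Real.log ((b:ℝ) / ((b:ℝ)+1)) ≤ (b:ℝ)/((b:ℝ)+1) - 1 :=
        Real.log_le_sub_one_of_pos (by positivity)
      have : (b:ℝ)/((b:ℝ)+1) - 1 = - (1/((b:ℝ)+1)) := by field_simp; ring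
      linarith [this ▸ hle]
    push_cast
    push_cast at ih
    linarith

/-- The telescoping argument of Theorem 3 (logarithmic regret bound): if
`‖P_t − P_{t−1}‖ ≤ p*/t` for all `t* < t ≤ T` and `‖P_{t*} − P*‖ ≤ c`, then for
any positive semidefinite `N`,
`Tr(P_T N) − Tr(P* N) ≤ Tr(N) (c + p* (log T − log t*))`. -/
theorem stmt_16 {n : ℕ} (hn : 1 ≤ n)
    (P : ℕ → Matrix (Fin n) (Fin n) ℝ)
    (hPsymm : ∀ t, 1 ≤ t → (P t).IsSymm)
    (Pstar : Matrix (Fin n) (Fin n) ℝ) (hPstar : Pstar.IsSymm)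
    (N : Matrix (Fin n) (Fin n) ℝ) (hN : N.PosSemidef)
    (tstar T : ℕ) (htstar : 1 ≤ tstar) (htT : tstar ≤ T)
    (pstar c : ℝ) (hpstar : 0 < pstar) (hc : 0 ≤ c)
    (hstep : ∀ t : ℕ, tstar < t → t ≤ T → specNorm (P t - P (t - 1)) ≤ pstar / (t : ℝ))
    (hburn : specNorm (P tstar - Pstar) ≤ c) :
    (P T * N).trace - (Pstar * N).trace
      ≤ N.trace * (c + pstar * (Real.log (T : ℝ) - Real.log (tstar : ℝ))) := by
  have htrN : 0 ≤ N.trace := by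
    rw [Matrix.trace]
    apply Finset.sum_nonneg
    intro i _
    simpa using hN.2 (Finsupp.single i 1)
  have main : ∀ b, tstar ≤ b → b ≤ T →
      ((P b - Pstar) * N).trace
        ≤ N.trace * (c + pstar * ∑ t ∈ Finset.Ioc tstar b, (1:ℝ) / t) := by
    intro b hb
    induction b, hb using Nat.le_induction with
    | base =>
      intro _
      simp only [Finset.Ioc_self, Finset.sum_empty, mul_zero, add_zero]
      calc ((P tstar - Pstar) * N).trace ≤ specNorm (P tstar - Pstar) * N.trace :=
            trace_mul_le _ _ hN
        _ ≤ c * N.trace := by gcongr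
        _ = N.trace * c := mul_comm _ _
    | succ b hab ih =>
      intro hb1T
      have ihT := ih (by omega)
      have hsplit : ((P (b+1) - Pstar) * N).trace
          = ((P (b+1) - P b) * N).trace + ((P b - Pstar) * N).trace := by
        rw [← Matrix.trace_add, ← Matrix.add_mul]
        congr 1
        abel
      have hb0 : (0:ℝ) < (b:ℝ) + 1 := by positivity
      have hstepb : specNorm (P (b+1) - P b) ≤ pstar / ((b:ℝ)+1) := by
        have := hstep (b+1) (by omega) hb1T
        simpa using this
      have h1 : ((P (b+1) - P b) * N).trace ≤ (pstar / ((b:ℝ)+1)) * N.trace :=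
        le_trans (trace_mul_le _ _ hN) (by gcongr)
      rw [hsplit, Finset.sum_Ioc_succ_top (by omega : tstar ≤ b)]
      push_cast
      have heq : pstar / ((b:ℝ)+1) * N.trace
            + N.trace * (c + pstar * ∑ t ∈ Finset.Ioc tstar b, (1:ℝ)/t)
          = N.trace * (c + pstar * ((∑ t ∈ Finset.Ioc tstar b, (1:ℝ)/t) + 1/((b:ℝ)+1))) := by
        ring
      linarith
  have hmain := main T htT le_rfl
  have hharm := harmonic_le_log htstar T htT
  have hsub : ((P T - Pstar) * N).trace = (P T * N).trace - (Pstar * N).trace := by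
    rw [Matrix.sub_mul, Matrix.trace_sub]
  calc (P T * N).trace - (Pstar * N).trace
      ≤ N.trace * (c + pstar * ∑ t ∈ Finset.Ioc tstar T, (1:ℝ) / t) := hsub ▸ hmain
    _ ≤ N.trace * (c + pstar * (Real.log (T : ℝ) - Real.log (tstar : ℝ))) := by
        gcongr
end
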